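/- Let r ≥ 1 and n ≥ 1, and let f ∈ F_2[t_1,…,t_r] be a homogeneous polynomial of degree n. Then f belongs to the ideal J_r if and only if Θ_n(f) = 0. (This is the paper's computation of its canonical ideal for an elementary abelian 2-group of rank r: the ideal {x : θ_{|x|}(x) = 0} of the polynomial cohomology ring F_2[t_1,…,t_r] is generated by the elements t_i² t_j + t_i t_j².) -/

import Mathlib


/-! ### Binary weight -/

def s2 (m : ℕ) : ℕ :=
  if h : m = 0 then 0 else m % 2 + s2 (m / 2)
termination_by m
decreasing_by exact Nat.div_lt_self (Nat.pos_of_ne_zero h) one_lt_two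

lemma s2_zero : s2 0 = 0 := by simp [s2]

lemma s2_def {m : ℕ} (h : m ≠ 0) : s2 m = m % 2 + s2 (m / 2) := by
  rw [s2]; simp [h]

lemma s2_two_mul (m : ℕ) : s2 (2 * m) = s2 m := by
  rcases Nat.eq_zero_or_pos m with h | h
  · simp [h, s2_zero]
  · rw [s2_def (by omega)]
    have h1 : 2 * m % 2 = 0 := by omega
    have h2 : 2 * m / 2 = m := by omega
    rw [h1, h2, zero_add]

lemma s2_two_mul_add_one (m : ℕ) : s2 (2 * m + 1) = s2 m + 1 := by
  rw [s2_def (by omega)]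
  have h1 : (2 * m + 1) % 2 = 1 := by omega
  have h2 : (2 * m + 1) / 2 = m := by omega
  rw [h1, h2]; omega

lemma s2_two_pow (e : ℕ) : s2 (2 ^ e) = 1 := by
  induction e with
  | zero => simp [s2_def, s2_zero]
  | succ e ih => rw [pow_succ, mul_comm, s2_two_mul]; exact ih

lemma s2_two_pow_sub_one (t : ℕ) : s2 (2 ^ t - 1) = t := by
  induction t with
  | zero => simp [s2_zero]
  | succ t ih =>
    have h : 2 ^ (t + 1) - 1 = 2 * (2 ^ t - 1) + 1 := by
      have := Nat.one_le_two_pow (n := t); rw [pow_succ]; omega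
    rw [h, s2_two_mul_add_one, ih]

lemma s2_one : s2 1 = 1 := by rw [s2_def one_ne_zero]; simp [s2_zero]

lemma s2_succ_le (m : ℕ) : s2 (m + 1) ≤ s2 m + 1 := by
  induction m using Nat.strong_induction_on with
  | _ m ih =>
    rcases Nat.even_or_odd m with ⟨k, hk⟩ | ⟨k, hk⟩
    · subst hk
      rw [show k + k = 2 * k by ring, s2_two_mul, s2_two_mul_add_one]
    · subst hk
      have h1 : 2 * k + 1 + 1 = 2 * (k + 1) := by ring
      rw [h1, s2_two_mul, s2_two_mul_add_one]
      rcases Nat.eq_zero_or_pos k with h | h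
      · simp [h, s2_zero, s2_one]
      · have := ih k (by omega)
        omega

lemma s2_add_le (a b : ℕ) : s2 (a + b) ≤ s2 a + s2 b := by
  induction a using Nat.strong_induction_on generalizing b with
  | _ a ih =>
    rcases Nat.eq_zero_or_pos a with h | h
    · simp [h, s2_zero]
    rcases Nat.even_or_odd a with ⟨j, hj⟩ | ⟨j, hj⟩ <;>
      rcases Nat.even_or_odd b with ⟨k, hk⟩ | ⟨k, hk⟩
    · subst hj hk
      have h1 : j + j + (k + k) = 2 * (j + k) := by ring
      rw [h1, s2_two_mul, show j + j = 2 * j by ring, s2_two_mul,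
        show k + k = 2 * k by ring, s2_two_mul]
      exact ih j (by omega) k
    · subst hj hk
      have h1 : j + j + (2 * k + 1) = 2 * (j + k) + 1 := by ring
      rw [h1, s2_two_mul_add_one, show j + j = 2 * j by ring, s2_two_mul, s2_two_mul_add_one]
      have := ih j (by omega) k; omega
    · subst hj hk
      have h1 : 2 * j + 1 + (k + k) = 2 * (j + k) + 1 := by ring
      rw [h1, s2_two_mul_add_one, s2_two_mul_add_one, show k + k = 2 * k by ring, s2_two_mul]
      have := ih j (by omega) k; omega
    · subst hj hk
      have h1 : 2 * j + 1 + (2 * k + 1) = 2 * (j + k + 1) := by ring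
      rw [h1, s2_two_mul, s2_two_mul_add_one, s2_two_mul_add_one]
      have h2 := ih j (by omega) k
      have h3 : s2 (j + k + 1) ≤ s2 (j + k) + 1 := s2_succ_le _
      omega

lemma s2_sum_le {ι : Type*} (s : Finset ι) (f : ι → ℕ) :
    s2 (∑ i ∈ s, f i) ≤ ∑ i ∈ s, s2 (f i) := by
  classical
  induction s using Finset.induction_on with
  | empty => simp [s2_zero]
  | insert _ _ h ih =>
    rw [Finset.sum_insert h, Finset.sum_insert h]
    exact le_trans (s2_add_le _ _) (by omega)

/-! ### The mod-2 count of tuples of powers of two, digit-recursive form -/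

def nu (m b : ℕ) : ZMod 2 :=
  if b = 0 then (if m = 0 then 1 else 0)
  else if b % 2 = 1 then (if m % 2 = 1 then nu ((m - 1) / 2) (b / 2) else 0)
  else nu ((m + 1) / 2) (b / 2)
termination_by b
decreasing_by all_goals exact Nat.div_lt_self (Nat.pos_of_ne_zero (by assumption)) one_lt_two

lemma nu_zero_right (m : ℕ) : nu m 0 = if m = 0 then 1 else 0 := by rw [nu]; simp

lemma nu_odd {b : ℕ} (h : b % 2 = 1) (m : ℕ) :
    nu m b = if m % 2 = 1 then nu ((m - 1) / 2) (b / 2) else 0 := by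
  rw [nu]; simp [h, show b ≠ 0 by omega]

lemma nu_even {b : ℕ} (h0 : b ≠ 0) (h : b % 2 = 0) (m : ℕ) :
    nu m b = nu ((m + 1) / 2) (b / 2) := by
  rw [nu]; simp [h, h0]

lemma nu_zero_left (b : ℕ) : nu 0 b = if b = 0 then 1 else 0 := by
  induction b using Nat.strong_induction_on with
  | _ b ih =>
    rcases Nat.eq_zero_or_pos b with h | h
    · simp [h, nu_zero_right]
    rcases Nat.even_or_odd b with ⟨k, hk⟩ | ⟨k, hk⟩
    · rw [nu_even (by omega) (by omega)]
      have : (0 + 1) / 2 = 0 := by norm_num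
      rw [this, ih (b / 2) (by omega)]
      simp [show b / 2 ≠ 0 by omega, show b ≠ 0 by omega]
    · rw [nu_odd (by omega)]
      simp [show b ≠ 0 by omega]

lemma zmod2_add_self (x : ZMod 2) : x + x = 0 := by
  rw [← two_mul, show (2 : ZMod 2) = 0 from rfl, zero_mul]

lemma nu_one_right (m : ℕ) : nu m 1 = if m = 1 then 1 else 0 := by
  rw [nu_odd (by omega)]
  by_cases hm : m % 2 = 1
  · rw [if_pos hm, show (1:ℕ)/2 = 0 from rfl, nu_zero_right]
    by_cases h1 : m = 1
    · simp [h1]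
    · rw [if_neg (by omega), if_neg h1]
  · rw [if_neg hm, if_neg (by omega)]

lemma nu_R (a b : ℕ) (hb : 1 ≤ b) : nu (a + 2) b = nu (a + 1) b + nu a (b - 1) := by
  induction b using Nat.strong_induction_on generalizing a with
  | _ b ih =>
    rcases Nat.even_or_odd b with hbp | hbp
    · -- b even
      have hbe : b % 2 = 0 := by rcases hbp with ⟨c, hc⟩; omega
      obtain ⟨c, hbc⟩ : ∃ c, b = 2 * c := ⟨b / 2, by omega⟩
      have hc1 : 1 ≤ c := by omega
      rcases Nat.even_or_odd a with ⟨j, hj⟩ | ⟨j, hj⟩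
      · -- a even
        have e1 : nu (a + 2) b = nu (j + 1) c := by
          rw [nu_even (by omega) hbe, show (a + 2 + 1) / 2 = j + 1 from by omega, show b / 2 = c from by omega]
        have e2 : nu (a + 1) b = nu (j + 1) c := by
          rw [nu_even (by omega) hbe, show (a + 1 + 1) / 2 = j + 1 from by omega, show b / 2 = c from by omega]
        have e3 : nu a (b - 1) = 0 := by
          rw [nu_odd (by omega), if_neg (by omega)]
        rw [e1, e2, e3, add_zero]
      · -- a odd
        have e1 : nu (a + 2) b = nu (j + 2) c := by
          rw [nu_even (by omega) hbe, show (a + 2 + 1) / 2 = j + 2 from by omega, show b / 2 = c from by omega]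
        have e2 : nu (a + 1) b = nu (j + 1) c := by
          rw [nu_even (by omega) hbe, show (a + 1 + 1) / 2 = j + 1 from by omega, show b / 2 = c from by omega]
        have e3 : nu a (b - 1) = nu j (c - 1) := by
          rw [nu_odd (by omega), if_pos (by omega), show (a - 1) / 2 = j from by omega,
            show (b - 1) / 2 = c - 1 from by omega]
        rw [e1, e2, e3]
        rcases Nat.lt_or_ge c 2 with h | h
        · have : c = 1 := by omega
          subst this
          rw [nu_one_right, nu_one_right, show (1:ℕ) - 1 = 0 from rfl, nu_zero_right]
          by_cases hj0 : j = 0 <;> simp [hj0] <;> decide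
        · exact ih c (by omega) j (by omega)
    · -- b odd
      have hbo : b % 2 = 1 := by rcases hbp with ⟨c, hc⟩; omega
      obtain ⟨c, hbc⟩ : ∃ c, b = 2 * c + 1 := ⟨b / 2, by omega⟩
      rcases Nat.even_or_odd a with ⟨j, hj⟩ | ⟨j, hj⟩
      · -- a even : LHS = 0
        have e1 : nu (a + 2) b = 0 := by
          rw [nu_odd hbo, if_neg (by omega)]
        have e2 : nu (a + 1) b = nu j c := by
          rw [nu_odd hbo, if_pos (by omega), show (a + 1 - 1) / 2 = j from by omega, show b / 2 = c from by omega]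
        rw [e1, e2]
        rcases Nat.eq_zero_or_pos c with h | h
        · have e3 : nu a (b - 1) = nu a 0 := by rw [show b - 1 = 0 from by omega]
          rw [e3, nu_zero_right, h, nu_zero_right]
          by_cases hj0 : j = 0
          · rw [if_pos hj0, if_pos (by omega), zmod2_add_self]
          · rw [if_neg hj0, if_neg (by omega), add_zero]
        · have e3 : nu a (b - 1) = nu j c := by
            rw [nu_even (by omega) (by omega), show (b - 1) / 2 = c from by omega,
              show (a + 1) / 2 = j from by omega]
          rw [e3, zmod2_add_self]
      · -- a odd
        have e1 : nu (a + 2) b = nu (j + 1) c := by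
          rw [nu_odd hbo, if_pos (by omega), show (a + 2 - 1) / 2 = j + 1 from by omega, show b / 2 = c from by omega]
        have e2 : nu (a + 1) b = 0 := by
          rw [nu_odd hbo, if_neg (by omega)]
        rw [e1, e2, zero_add]
        rcases Nat.eq_zero_or_pos c with h | h
        · rw [h, nu_zero_right, show b - 1 = 0 from by omega, nu_zero_right,
            if_neg (by omega), if_neg (by omega)]
        · have e3 : nu a (b - 1) = nu (j + 1) c := by
            rw [nu_even (by omega) (by omega), show (b - 1) / 2 = c from by omega,
              show (a + 1) / 2 = j + 1 from by omega]
          rw [e3]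

lemma nu_one_two_pow (c : ℕ) : nu 1 (2 ^ c) = 1 := by
  induction c with
  | zero => rw [pow_zero, nu_odd (by omega)]; simp [nu_zero_right]
  | succ c ih =>
    have h2 : (2:ℕ) ^ (c + 1) % 2 = 0 := by
      rw [pow_succ]; omega
    rw [nu_even (by positivity) h2, pow_succ]
    simpa using ih

lemma nu_two_pow {m t : ℕ} (h1 : 1 ≤ m) (h2 : m ≤ 2 ^ t) : nu m (2 ^ t) = 1 := by
  induction t generalizing m with
  | zero =>
    have : m = 1 := by omega
    subst this; exact nu_one_two_pow 0
  | succ t ih =>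
    have hK : (2:ℕ) ^ (t + 1) = 2 * 2 ^ t := by rw [pow_succ]; ring
    have h2' : (2:ℕ) ^ (t+1) % 2 = 0 := by omega
    rw [nu_even (by positivity) h2']
    have hd : 2 ^ (t+1) / 2 = 2 ^ t := by omega
    rw [hd]
    have hp := Nat.one_le_two_pow (n := t)
    exact ih (by omega) (by omega)

lemma nu_ne_zero {m b : ℕ} (h : nu m b ≠ 0) : s2 b ≤ m ∧ m ≤ b := by
  induction b using Nat.strong_induction_on generalizing m with
  | _ b ih =>
    rcases Nat.eq_zero_or_pos b with h0 | h0
    · subst h0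
      rw [nu_zero_right] at h
      rcases Nat.eq_zero_or_pos m with h1 | h1
      · simp [h1, s2_zero]
      · simp [show m ≠ 0 by omega] at h
    rcases Nat.even_or_odd b with ⟨c, hc⟩ | ⟨c, hc⟩
    · rw [nu_even (by omega) (by omega), show b / 2 = c from by omega] at h
      have := ih c (by omega) h
      have hs : s2 b = s2 c := by rw [show b = 2 * c from by omega, s2_two_mul]
      rcases Nat.even_or_odd m with ⟨j, hj⟩ | ⟨j, hj⟩ <;> omega
    · rw [nu_odd (by omega)] at h
      by_cases hm : m % 2 = 1
      · rw [if_pos hm, show b / 2 = c from by omega] at h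
        have := ih c (by omega) h
        have hs : s2 b = s2 c + 1 := by rw [show b = 2 * c + 1 from by omega, s2_two_mul_add_one]
        omega
      · rw [if_neg hm] at h; exact absurd rfl h

/-! ### Counting tuples of powers of two via finite sums -/

lemma lt_two_pow_of_le {b B : ℕ} (h : b ≤ B) : b < 2 ^ B :=
  lt_of_lt_of_le (Nat.lt_two_pow_self (n := b)) (Nat.pow_le_pow_right (by norm_num) h)

def box (a B : ℕ) : Finset (Fin a → ℕ) := Fintype.piFinset fun _ => Finset.range B

lemma mem_box {a B : ℕ} {e : Fin a → ℕ} : e ∈ box a B ↔ ∀ l, e l < B := by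
  simp [box, Fintype.mem_piFinset]

lemma cond_mem_box {a b B : ℕ} (hB : b < 2 ^ B) {e : Fin a → ℕ}
    (hc : (∑ l, 2 ^ e l) = b) : e ∈ box a B := by
  rw [mem_box]
  intro l
  have h1 : 2 ^ e l ≤ b := hc ▸ Finset.single_le_sum (f := fun l => 2 ^ e l)
    (fun _ _ => Nat.zero_le _) (Finset.mem_univ l)
  have h2 : 2 ^ e l < 2 ^ B := lt_of_le_of_lt h1 hB
  exact (Nat.pow_lt_pow_iff_right (by norm_num)).mp h2

noncomputable def cnt (a b : ℕ) : ZMod 2 :=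
  ∑ e ∈ box a (b + 1), if (∑ l, 2 ^ e l) = b then 1 else 0

lemma cnt_filter (a b B : ℕ) (hB : b < 2 ^ B) :
    cnt a b = ∑ _e ∈ (box a B).filter (fun e => (∑ l, 2 ^ e l) = b), (1 : ZMod 2) := by
  rw [cnt, ← Finset.sum_filter]
  apply Finset.sum_congr _ (fun _ _ => rfl)
  ext e
  simp only [Finset.mem_filter]
  constructor
  · rintro ⟨-, h⟩; exact ⟨cond_mem_box hB h, h⟩
  · rintro ⟨-, h⟩; exact ⟨cond_mem_box (lt_two_pow_of_le (by omega)) h, h⟩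

lemma sum_box {a b B : ℕ} (hB : b < 2 ^ B) :
    (∑ e ∈ box a B, if (∑ l, 2 ^ e l) = b then (1 : ZMod 2) else 0) = cnt a b := by
  rw [cnt_filter a b B hB, Finset.sum_filter]

lemma cnt_zero (b : ℕ) : cnt 0 b = nu 0 b := by
  rw [cnt, nu_zero_left]
  have hbox : box 0 (b + 1) = {![]} := by
    ext e
    simp only [mem_box, Finset.mem_singleton]
    constructor
    · intro _; exact Subsingleton.elim _ _
    · intro _ l; exact l.elim0
  rw [hbox, Finset.sum_singleton]
  simp [eq_comm]

lemma nu_one_eq_zero {b : ℕ} (h : ∀ c, 2 ^ c ≠ b) : nu 1 b = 0 := by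
  induction b using Nat.strong_induction_on with
  | _ b ih =>
    rcases Nat.eq_zero_or_pos b with h0 | h0
    · subst h0; rw [nu_zero_right]; simp
    rcases Nat.even_or_odd b with ⟨c, hc⟩ | ⟨c, hc⟩
    · rw [nu_even (by omega) (by omega), show (1+1)/2 = 1 from rfl]
      exact ih (b/2) (by omega) (fun d hd => h (d+1) (by rw [pow_succ]; omega))
    · rw [nu_odd (by omega), if_pos (by omega), show (1-1)/2 = 0 from rfl, nu_zero_left]
      have : b ≠ 1 := fun hb => h 0 (by simp [hb])
      simp [show b / 2 ≠ 0 by omega]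

lemma cnt_one (b : ℕ) : cnt 1 b = nu 1 b := by
  rw [cnt_filter 1 b (b+1) (lt_two_pow_of_le (by omega))]
  by_cases hp : ∃ c, 2 ^ c = b
  · obtain ⟨c, hc⟩ := hp
    have hfil : (box 1 (b+1)).filter (fun e => (∑ l, 2 ^ e l) = b) = {fun _ => c} := by
      ext e
      simp only [Finset.mem_filter, Finset.mem_singleton, Fin.sum_univ_one]
      constructor
      · rintro ⟨-, h⟩
        funext l
        have hl : l = 0 := Subsingleton.elim _ _
        subst hl
        exact Nat.pow_right_injective (le_refl 2) (h.trans hc.symm)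
      · rintro rfl
        have hsum : (∑ l : Fin 1, 2 ^ ((fun _ : Fin 1 => c) l)) = b := by simp [hc]
        exact ⟨cond_mem_box (lt_two_pow_of_le (by omega)) hsum, by simpa using hsum⟩
    rw [hfil, Finset.sum_singleton, ← hc, nu_one_two_pow]
  · push_neg at hp
    have hfil : (box 1 (b+1)).filter (fun e => (∑ l, 2 ^ e l) = b) = ∅ := by
      ext e
      simp only [Finset.mem_filter, Finset.notMem_empty, iff_false, not_and, Fin.sum_univ_one]
      exact fun _ => hp (e 0)
    rw [hfil, Finset.sum_empty, nu_one_eq_zero hp]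

lemma cnt_R (a b : ℕ) (hb : 1 ≤ b) : cnt (a + 2) b = cnt (a + 1) b + cnt a (b - 1) := by
  classical
  set s2' : Finset (Fin (a + 2) → ℕ) :=
    (box (a+2) (b+1)).filter (fun e => (∑ l, 2 ^ e l) = b) with hs2
  set sEq : Finset (Fin (a + 2) → ℕ) := s2'.filter (fun e => e 0 = e 1) with hsEq
  set sNe : Finset (Fin (a + 2) → ℕ) := s2'.filter (fun e => ¬ e 0 = e 1) with hsNe
  set t1 : Finset (Fin (a + 1) → ℕ) :=
    (box (a+1) (b+2)).filter (fun f => (∑ l, 2 ^ f l) = b) with ht1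
  set tPos : Finset (Fin (a + 1) → ℕ) := t1.filter (fun f => 1 ≤ f 0) with htPos
  set tZero : Finset (Fin (a + 1) → ℕ) := t1.filter (fun f => ¬ 1 ≤ f 0) with htZero
  have h2 : cnt (a+2) b = ∑ _e ∈ sEq, (1 : ZMod 2) + ∑ _e ∈ sNe, (1 : ZMod 2) := by
    rw [cnt_filter (a+2) b (b+1) (lt_two_pow_of_le (by omega)), ← Finset.sum_filter_add_sum_filter_not s2'
      (fun e => e 0 = e 1)]
  have hNe : ∑ _e ∈ sNe, (1 : ZMod 2) = 0 := by
    apply Finset.sum_involution (fun e _ => e ∘ (Equiv.swap (0 : Fin (a+2)) 1))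
    · intro e _; exact zmod2_add_self 1
    · intro e he h1
      simp only [hsNe, hs2, Finset.mem_filter] at he
      intro hcontra
      apply he.2
      have := congrFun hcontra 0
      simpa [Equiv.swap_apply_left] using this.symm
    · intro e he
      simp only [hsNe, hs2, Finset.mem_filter, mem_box] at he ⊢
      obtain ⟨⟨hbox, hsum⟩, hne⟩ := he
      refine ⟨⟨fun l => hbox _, ?_⟩, ?_⟩
      · rw [← hsum]
        simpa [Function.comp] using Equiv.sum_comp (Equiv.swap (0 : Fin (a+2)) 1) (fun l => 2 ^ e l)
      · simp only [Function.comp_apply, Equiv.swap_apply_left, Equiv.swap_apply_right]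
        exact fun h => hne h.symm
    · intro e _
      funext l
      simp [Function.comp_apply, Equiv.swap_apply_self]
  have hEq : ∑ _e ∈ sEq, (1 : ZMod 2) = ∑ _f ∈ tPos, (1 : ZMod 2) := by
    refine Finset.sum_nbij' (i := fun e => Fin.cons (e 0 + 1) (fun l : Fin a => e l.succ.succ))
      (j := fun f => Fin.cons (f 0 - 1) (Fin.cons (f 0 - 1) (fun l : Fin a => f l.succ)))
      ?_ ?_ ?_ ?_ ?_
    · intro e he
      simp only [hsEq, hs2, Finset.mem_filter, mem_box] at he
      obtain ⟨⟨hbox, hsum⟩, heq⟩ := he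
      have hsum2 : 2 ^ (e 0) + 2 ^ (e 0) + ∑ l : Fin a, 2 ^ e l.succ.succ = b := by
        rw [← hsum, Fin.sum_univ_succ, Fin.sum_univ_succ]
        rw [show e 0 = e 1 from heq]
        simp [Fin.succ_zero_eq_one, add_assoc]
      have hnew : (∑ l, 2 ^ (Fin.cons (e 0 + 1) (fun l : Fin a => e l.succ.succ) : Fin (a+1) → ℕ) l) = b := by
        rw [Fin.sum_univ_succ]
        simp only [Fin.cons_zero, Fin.cons_succ]
        rw [pow_succ]
        omega
      simp only [htPos, ht1, Finset.mem_filter]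
      exact ⟨⟨cond_mem_box (lt_two_pow_of_le (by omega)) hnew, hnew⟩, by simp⟩
    · intro f hf
      simp only [htPos, ht1, Finset.mem_filter, mem_box] at hf
      obtain ⟨⟨hbox, hsum⟩, hpos⟩ := hf
      have hsum2 : 2 ^ (f 0) + ∑ l : Fin a, 2 ^ f l.succ = b := by
        rw [← hsum, Fin.sum_univ_succ]
      have hpow : 2 ^ (f 0 - 1) + 2 ^ (f 0 - 1) = 2 ^ (f 0) := by
        rw [← two_mul, ← pow_succ']
        congr 1
        omega
      have hnew : (∑ l, 2 ^ (Fin.cons (f 0 - 1) (Fin.cons (f 0 - 1) (fun l : Fin a => f l.succ)) : Fin (a+2) → ℕ) l) = b := by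
        rw [Fin.sum_univ_succ, Fin.sum_univ_succ]
        simp only [Fin.cons_zero, Fin.cons_succ]
        omega
      simp only [hsEq, hs2, Finset.mem_filter]
      exact ⟨⟨cond_mem_box (lt_two_pow_of_le (by omega)) hnew, hnew⟩,
        by simp [Fin.succ_zero_eq_one]⟩
    · intro e he
      simp only [hsEq, hs2, Finset.mem_filter] at he
      have heq : e 0 = e 1 := he.2
      funext l
      refine Fin.cases ?_ (fun l2 => ?_) l
      · simp [Fin.cons_zero]
      · rw [Fin.cons_succ]
        refine Fin.cases ?_ (fun l3 => ?_) l2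
        · rw [Fin.cons_zero, Fin.succ_zero_eq_one]
          simp only [Fin.cons_zero]
          omega
        · rw [Fin.cons_succ]
          simp [Fin.cons_succ]
    · intro f hf
      simp only [htPos, ht1, Finset.mem_filter] at hf
      have hpos : 1 ≤ f 0 := hf.2
      funext l
      refine Fin.cases ?_ (fun l2 => ?_) l
      · simp only [Fin.cons_zero]
        omega
      · simp [Fin.cons_succ]
    · intro e _; rfl
  have hZero : ∑ _f ∈ tZero, (1 : ZMod 2) = cnt a (b - 1) := by
    rw [cnt_filter a (b-1) (b+2) (lt_two_pow_of_le (by omega))]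
    refine Finset.sum_nbij' (i := fun f => Fin.tail f) (j := fun g => Fin.cons 0 g) ?_ ?_ ?_ ?_ ?_
    · intro f hf
      simp only [htZero, ht1, Finset.mem_filter, mem_box] at hf
      obtain ⟨⟨hbox, hsum⟩, hzero⟩ := hf
      have hf0 : f 0 = 0 := by omega
      have hsum2 : 1 + ∑ l : Fin a, 2 ^ f l.succ = b := by
        rw [← hsum, Fin.sum_univ_succ, hf0, pow_zero]
      have hnew : (∑ l, 2 ^ (Fin.tail f) l) = b - 1 := by
        simp only [Fin.tail]
        omega
      simp only [Finset.mem_filter]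
      exact ⟨cond_mem_box (lt_two_pow_of_le (by omega)) hnew, hnew⟩
    · intro g hg
      simp only [Finset.mem_filter, mem_box] at hg
      obtain ⟨hbox, hsum⟩ := hg
      have hnew : (∑ l, 2 ^ (Fin.cons 0 g : Fin (a+1) → ℕ) l) = b := by
        rw [Fin.sum_univ_succ]
        simp only [Fin.cons_zero, Fin.cons_succ, pow_zero]
        omega
      simp only [htZero, ht1, Finset.mem_filter]
      exact ⟨⟨cond_mem_box (lt_two_pow_of_le (by omega)) hnew, hnew⟩, by simp⟩
    · intro f hf
      simp only [htZero, ht1, Finset.mem_filter] at hf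
      have hf0 : f 0 = 0 := by omega
      funext l
      refine Fin.cases ?_ (fun l2 => ?_) l
      · simp [Fin.cons_zero, hf0]
      · simp [Fin.cons_succ, Fin.tail]
    · intro g _
      funext l
      simp [Fin.tail, Fin.cons_succ]
    · intro f _; rfl
  have h1 : cnt (a+1) b = ∑ _f ∈ tPos, (1 : ZMod 2) + ∑ _f ∈ tZero, (1 : ZMod 2) := by
    rw [cnt_filter (a+1) b (b+2) (lt_two_pow_of_le (by omega)),
      ← Finset.sum_filter_add_sum_filter_not t1 (fun f => 1 ≤ f 0)]
  rw [h2, hNe, add_zero, hEq, h1, hZero, add_assoc, zmod2_add_self, add_zero]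

lemma cnt_eq_nu (a b : ℕ) : cnt a b = nu a b := by
  induction a using Nat.strong_induction_on generalizing b with
  | _ a ih =>
    match a with
    | 0 => exact cnt_zero b
    | 1 => exact cnt_one b
    | (a + 2) =>
      rcases Nat.eq_zero_or_pos b with h0 | h0
      · subst h0
        rw [nu_zero_right, if_neg (by omega), cnt_filter (a+2) 0 1 (by norm_num)]
        have hfil : (box (a+2) 1).filter (fun e => (∑ l, 2 ^ e l) = 0) = ∅ := by
          ext e
          simp only [Finset.mem_filter, Finset.notMem_empty, iff_false, not_and]
          intro _
          have : (0:ℕ) < ∑ l, 2 ^ e l :=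
            Finset.sum_pos (fun l _ => Nat.pow_pos (by norm_num))
              ⟨0, Finset.mem_univ 0⟩
          omega
        rw [hfil, Finset.sum_empty]
      · rw [cnt_R a b h0, nu_R a b h0, ih (a+1) (by omega), ih a (by omega)]


open MvPolynomial

/-- `J r` is the ideal of `F₂[t 1, …, t r]` generated by the elements
`t i ^ 2 * t j + t i * t j ^ 2` for `1 ≤ i, j ≤ r`. -/
noncomputable def J (r : ℕ) : Ideal (MvPolynomial (Fin r) (ZMod 2)) :=
  Ideal.span {p | ∃ i j : Fin r, p = X i ^ 2 * X j + X i * X j ^ 2}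

/-- `ThetaMono r n a` is the value of the operation `Θ n` on the degree-`n` monomial
`∏ i, t i ^ a i`: the sum, over all families `(e (i, l))` of nonnegative integers indexed by
pairs `(i, l)` with `1 ≤ i ≤ r`, `1 ≤ l ≤ a i`, satisfying `∑ (i, l), 2 ^ e (i, l) = 2^(n-1)`,
of the monomials `∏ i, t i ^ (∑ l, 2 ^ e (i, l))`. -/
noncomputable def ThetaMono (r n : ℕ) (a : Fin r → ℕ) : MvPolynomial (Fin r) (ZMod 2) :=
  ∑ᶠ e : ((i : Fin r) × Fin (a i)) → ℕ,
    if (∑ p : (i : Fin r) × Fin (a i), 2 ^ e p) = 2 ^ (n - 1) then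
      ∏ i, X i ^ (∑ l : Fin (a i), 2 ^ e ⟨i, l⟩)
    else 0

/-- `Theta r n f` is the `F₂`-linear extension of `ThetaMono r n` to arbitrary polynomials,
i.e. the operation `Θ n` applied to `f`. -/
noncomputable def Theta (r n : ℕ) (f : MvPolynomial (Fin r) (ZMod 2)) :
    MvPolynomial (Fin r) (ZMod 2) :=
  ∑ a ∈ f.support, f.coeff a • ThetaMono r n (fun i => a i)

/-! ### The coefficient formula for `ThetaMono` -/

lemma prod_X_pow_univ {r : ℕ} (c : Fin r → ℕ) :
    (∏ i, (X i : MvPolynomial (Fin r) (ZMod 2)) ^ c i)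
      = monomial (Finsupp.equivFunOnFinite.symm c) 1 := by
  rw [← MvPolynomial.prod_X_pow_eq_monomial (s := Finsupp.equivFunOnFinite.symm c)]
  exact (Finset.prod_subset (Finset.subset_univ _) (fun i _ hi => by
    rw [show c i = 0 from Finsupp.notMem_support_iff.mp hi, pow_zero])).symm

lemma coeff_ThetaMono {r n : ℕ} (hn : 1 ≤ n) (a : Fin r → ℕ) (w : Fin r →₀ ℕ) :
    MvPolynomial.coeff w (ThetaMono r n a) =
      if (∑ i, w i) = 2 ^ (n - 1) then ∏ i, nu (a i) (w i) else 0 := by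
  classical
  rw [ThetaMono]
  have hfin : (∑ᶠ e : ((i : Fin r) × Fin (a i)) → ℕ,
      if (∑ p : (i : Fin r) × Fin (a i), 2 ^ e p) = 2 ^ (n - 1) then
        (∏ i, (X i : MvPolynomial (Fin r) (ZMod 2)) ^ (∑ l : Fin (a i), 2 ^ e ⟨i, l⟩))
      else 0) =
      ∑ e ∈ Fintype.piFinset (fun _ : (i : Fin r) × Fin (a i) => Finset.range n),
      if (∑ p : (i : Fin r) × Fin (a i), 2 ^ e p) = 2 ^ (n - 1) then
        (∏ i, (X i : MvPolynomial (Fin r) (ZMod 2)) ^ (∑ l : Fin (a i), 2 ^ e ⟨i, l⟩))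
      else 0 := by
    apply finsum_eq_sum_of_support_subset
    intro e he
    simp only [Function.mem_support, ne_eq, ite_eq_right_iff, not_forall] at he
    obtain ⟨hcond, -⟩ := he
    simp only [Finset.coe_sort_coe, Fintype.coe_piFinset, Set.mem_pi, Set.mem_univ,
      Finset.coe_range, Set.mem_Iio, forall_const]
    intro p
    have h1 : 2 ^ e p ≤ 2 ^ (n - 1) := hcond ▸ Finset.single_le_sum
      (f := fun p => 2 ^ e p) (fun _ _ => Nat.zero_le _) (Finset.mem_univ p)
    have := (Nat.pow_le_pow_iff_right (a := 2) (by norm_num)).mp h1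
    omega
  rw [hfin, MvPolynomial.coeff_sum]
  have hterm : ∀ e : ((i : Fin r) × Fin (a i)) → ℕ,
      MvPolynomial.coeff w (if (∑ p : (i : Fin r) × Fin (a i), 2 ^ e p) = 2 ^ (n - 1) then
        (∏ i, (X i : MvPolynomial (Fin r) (ZMod 2)) ^ (∑ l : Fin (a i), 2 ^ e ⟨i, l⟩))
      else 0) =
      if ((∑ p : (i : Fin r) × Fin (a i), 2 ^ e p) = 2 ^ (n - 1) ∧
          Finsupp.equivFunOnFinite.symm (fun i => ∑ l : Fin (a i), 2 ^ e ⟨i, l⟩) = w)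
        then 1 else 0 := by
    intro e
    rw [apply_ite (MvPolynomial.coeff w), MvPolynomial.coeff_zero, prod_X_pow_univ,
      MvPolynomial.coeff_monomial]
    by_cases h1 : (∑ p : (i : Fin r) × Fin (a i), 2 ^ e p) = 2 ^ (n - 1) <;>
      by_cases h2 : Finsupp.equivFunOnFinite.symm (fun i => ∑ l : Fin (a i), 2 ^ e ⟨i, l⟩) = w <;>
      simp [h1, h2]
  simp_rw [hterm]
  -- key: sigma sum = sum over i of w i when the monomial matches
  have hsig : ∀ e : ((i : Fin r) × Fin (a i)) → ℕ,
      (∑ p : (i : Fin r) × Fin (a i), 2 ^ e p) = ∑ i, ∑ l : Fin (a i), 2 ^ e ⟨i, l⟩ := by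
    intro e
    rw [← Finset.univ_sigma_univ, Finset.sum_sigma]
  have hmatch : ∀ e : ((i : Fin r) × Fin (a i)) → ℕ,
      (Finsupp.equivFunOnFinite.symm (fun i => ∑ l : Fin (a i), 2 ^ e ⟨i, l⟩) = w)
        ↔ ∀ i, (∑ l : Fin (a i), 2 ^ e ⟨i, l⟩) = w i := by
    intro e
    rw [Equiv.symm_apply_eq]
    constructor
    · intro h i; exact congrFun h i
    · intro h; funext i; exact h i
  by_cases hw : (∑ i, w i) = 2 ^ (n - 1)
  · rw [if_pos hw]
    have hterm2 : ∀ e : ((i : Fin r) × Fin (a i)) → ℕ,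
        (if ((∑ p : (i : Fin r) × Fin (a i), 2 ^ e p) = 2 ^ (n - 1) ∧
          Finsupp.equivFunOnFinite.symm (fun i => ∑ l : Fin (a i), 2 ^ e ⟨i, l⟩) = w)
        then (1 : ZMod 2) else 0) =
        ∏ i, if (∑ l : Fin (a i), 2 ^ e ⟨i, l⟩) = w i then 1 else 0 := by
      intro e
      rw [Finset.prod_boole]
      by_cases h2 : ∀ i, (∑ l : Fin (a i), 2 ^ e ⟨i, l⟩) = w i
      · rw [if_pos, if_pos (fun i _ => h2 i)]
        refine ⟨?_, (hmatch e).mpr h2⟩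
        rw [hsig e, ← hw]
        exact Finset.sum_congr rfl fun i _ => h2 i
      · rw [if_neg, if_neg]
        · intro hcon
          exact h2 fun i => hcon i (Finset.mem_univ i)
        · intro hcon
          exact h2 ((hmatch e).mp hcon.2)
    simp_rw [hterm2]
    -- reindex the sum over sigma-functions as a sum over dependent functions
    have hreindex : (∑ e ∈ Fintype.piFinset (fun _ : (i : Fin r) × Fin (a i) => Finset.range n),
        ∏ i, if (∑ l : Fin (a i), 2 ^ e ⟨i, l⟩) = w i then (1 : ZMod 2) else 0) =
        ∑ p ∈ Fintype.piFinset (fun i : Fin r => box (a i) n),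
        ∏ i, if (∑ l : Fin (a i), 2 ^ p i l) = w i then (1 : ZMod 2) else 0 := by
      refine Finset.sum_nbij' (i := fun e => Sigma.curry e) (j := fun p => Sigma.uncurry p)
        ?_ ?_ ?_ ?_ ?_
      · intro e he
        simp only [Fintype.mem_piFinset, Finset.mem_range] at he
        simp only [Fintype.mem_piFinset, mem_box]
        intro i l
        exact he ⟨i, l⟩
      · intro p hp
        simp only [Fintype.mem_piFinset, mem_box] at hp
        simp only [Fintype.mem_piFinset, Finset.mem_range]
        intro q
        exact hp q.1 q.2
      · intro e _; rfl
      · intro p _; rfl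
      · intro e _; rfl
    rw [hreindex, ← Finset.prod_univ_sum (t := fun i : Fin r => box (a i) n)
      (f := fun (i : Fin r) (g : Fin (a i) → ℕ) => if (∑ l, 2 ^ g l) = w i then (1:ZMod 2) else 0)]
    refine Finset.prod_congr rfl fun i _ => ?_
    have hwi : w i < 2 ^ n := by
      have h1 : w i ≤ ∑ j, w j := Finset.single_le_sum (f := fun j => w j)
        (fun _ _ => Nat.zero_le _) (Finset.mem_univ i)
      have h2 : (2:ℕ) ^ (n-1) < 2 ^ n := Nat.pow_lt_pow_right (by norm_num) (by omega)
      omega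
    rw [show (∑ g ∈ box (a i) n, if (∑ l, 2 ^ g l) = w i then (1 : ZMod 2) else 0) = cnt (a i) (w i)
      from sum_box hwi, cnt_eq_nu]
  · rw [if_neg hw]
    apply Finset.sum_eq_zero
    intro e _
    rw [if_neg]
    rintro ⟨h1, h2⟩
    apply hw
    rw [← h1, hsig e]
    exact (Finset.sum_congr rfl fun i _ => ((hmatch e).mp h2 i)).symm
/-! ### Basic properties of `Theta` -/

lemma poly_add_self {r : ℕ} (x : MvPolynomial (Fin r) (ZMod 2)) : x + x = 0 := by
  have h : x + x = ((1 : ZMod 2) + 1) • x := by rw [add_smul, one_smul]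
  rw [h, show (1 : ZMod 2) + 1 = 0 from rfl, zero_smul]

lemma Theta_support_subset {r n : ℕ} (f : MvPolynomial (Fin r) (ZMod 2))
    {s : Finset (Fin r →₀ ℕ)} (h : f.support ⊆ s) :
    Theta r n f = ∑ a ∈ s, f.coeff a • ThetaMono r n (fun i => a i) := by
  rw [Theta]
  exact Finset.sum_subset h (fun a _ ha => by
    rw [MvPolynomial.notMem_support_iff.mp ha, zero_smul])

lemma Theta_zero {r n : ℕ} : Theta r n 0 = 0 := by
  rw [Theta]
  simp

lemma Theta_add {r n : ℕ} (f g : MvPolynomial (Fin r) (ZMod 2)) :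
    Theta r n (f + g) = Theta r n f + Theta r n g := by
  classical
  rw [Theta_support_subset (f + g) (MvPolynomial.support_add),
    Theta_support_subset f (Finset.subset_union_left),
    Theta_support_subset g (Finset.subset_union_right), ← Finset.sum_add_distrib]
  exact Finset.sum_congr rfl fun a _ => by rw [MvPolynomial.coeff_add, add_smul]

lemma Theta_sum {r n : ℕ} {ι : Type*} (s : Finset ι) (F : ι → MvPolynomial (Fin r) (ZMod 2)) :
    Theta r n (∑ x ∈ s, F x) = ∑ x ∈ s, Theta r n (F x) := by
  classical
  induction s using Finset.induction_on with
  | empty => simp [Theta_zero]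
  | insert _ _ h ih => rw [Finset.sum_insert h, Finset.sum_insert h, Theta_add, ih]

lemma Theta_monomial {r n : ℕ} (u : Fin r →₀ ℕ) :
    Theta r n (MvPolynomial.monomial u 1) = ThetaMono r n (fun i => u i) := by
  classical
  rw [Theta, MvPolynomial.support_monomial, if_neg one_ne_zero, Finset.sum_singleton,
    MvPolynomial.coeff_monomial, if_pos rfl, one_smul]

/-! ### Degree facts -/

lemma degree_eq_sum_univ {r : ℕ} (u : Fin r →₀ ℕ) : Finsupp.degree u = ∑ i, u i :=
  Finset.sum_subset (Finset.subset_univ _) (fun i _ hi => Finsupp.notMem_support_iff.mp hi)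

lemma sum_single_univ {r : ℕ} (i : Fin r) (m : ℕ) : (∑ k, (Finsupp.single i m : Fin r →₀ ℕ) k) = m := by
  rw [Finset.sum_eq_single_of_mem i (Finset.mem_univ i)
    (fun k _ hk => by rw [Finsupp.single_apply, if_neg (fun h : i = k => hk h.symm)]),
    Finsupp.single_eq_same]

lemma homogComp_monomial {r n : ℕ} (d : Fin r →₀ ℕ) :
    MvPolynomial.homogeneousComponent n (MvPolynomial.monomial d (1 : ZMod 2)) =
      if n = ∑ i, d i then MvPolynomial.monomial d 1 else 0 := by
  have hmem : (MvPolynomial.monomial d (1 : ZMod 2)) ∈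
      MvPolynomial.homogeneousSubmodule (Fin r) (ZMod 2) (∑ i, d i) :=
    MvPolynomial.isHomogeneous_monomial 1 (degree_eq_sum_univ d)
  exact MvPolynomial.homogeneousComponent_of_mem hmem

/-! ### Direction 1 : `Theta` kills the degree-`n` part of `J` -/

lemma key1 {r n : ℕ} (hn : 1 ≤ n) (v : Fin r →₀ ℕ) (i j : Fin r) :
    Theta r n (MvPolynomial.homogeneousComponent n
      ((MvPolynomial.monomial v 1) *
        (MvPolynomial.X i ^ 2 * MvPolynomial.X j + MvPolynomial.X i * MvPolynomial.X j ^ 2))) = 0 := by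
  classical
  have hXa : (MvPolynomial.X i ^ 2 * MvPolynomial.X j : MvPolynomial (Fin r) (ZMod 2)) =
      MvPolynomial.monomial (Finsupp.single i 2 + Finsupp.single j 1) 1 := by
    rw [MvPolynomial.X_pow_eq_monomial, MvPolynomial.X, MvPolynomial.monomial_mul, mul_one]
  have hXb : (MvPolynomial.X i * MvPolynomial.X j ^ 2 : MvPolynomial (Fin r) (ZMod 2)) =
      MvPolynomial.monomial (Finsupp.single i 1 + Finsupp.single j 2) 1 := by
    rw [MvPolynomial.X_pow_eq_monomial, MvPolynomial.X, MvPolynomial.monomial_mul, mul_one]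
  set u1 : Fin r →₀ ℕ := v + (Finsupp.single i 2 + Finsupp.single j 1) with hu1
  set u2 : Fin r →₀ ℕ := v + (Finsupp.single i 1 + Finsupp.single j 2) with hu2
  have hexp : (MvPolynomial.monomial v 1) *
      (MvPolynomial.X i ^ 2 * MvPolynomial.X j + MvPolynomial.X i * MvPolynomial.X j ^ 2) =
      MvPolynomial.monomial u1 1 + MvPolynomial.monomial u2 (1 : ZMod 2) := by
    rw [mul_add, hXa, hXb, MvPolynomial.monomial_mul, MvPolynomial.monomial_mul, one_mul]
  rw [hexp]
  by_cases hij : i = j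
  · subst hij
    have : u1 = u2 := by
      rw [hu1, hu2]
      congr 1
      rw [← Finsupp.single_add, ← Finsupp.single_add]
    rw [this, poly_add_self, map_zero, Theta_zero]
  -- now i ≠ j
  have hdeg1 : (∑ k, u1 k) = (∑ k, v k) + 3 := by
    rw [hu1]
    simp only [Finsupp.add_apply]
    rw [Finset.sum_add_distrib, Finset.sum_add_distrib, sum_single_univ, sum_single_univ]
  have hdeg2 : (∑ k, u2 k) = (∑ k, v k) + 3 := by
    rw [hu2]
    simp only [Finsupp.add_apply]
    rw [Finset.sum_add_distrib, Finset.sum_add_distrib, sum_single_univ, sum_single_univ]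
  rw [map_add, homogComp_monomial, homogComp_monomial]
  by_cases hd : n = (∑ k, v k) + 3
  case neg =>
    rw [if_neg (by omega), if_neg (by omega), add_zero, Theta_zero]
  case pos =>
  rw [if_pos (by omega), if_pos (by omega), Theta_add, Theta_monomial, Theta_monomial]
  have hmain : ThetaMono r n (fun k => u1 k) = ThetaMono r n (fun k => u2 k) := by
    apply MvPolynomial.ext
    intro w
    rw [coeff_ThetaMono hn, coeff_ThetaMono hn]
    by_cases hw : (∑ k, w k) = 2 ^ (n - 1)
    case neg => rw [if_neg hw, if_neg hw]
    case pos =>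
    rw [if_pos hw, if_pos hw]
    -- split products at i and j
    have hji : j ∈ (Finset.univ : Finset (Fin r)).erase i :=
      Finset.mem_erase.mpr ⟨fun h => hij h.symm, Finset.mem_univ j⟩
    have hsplit : ∀ c : Fin r → ℕ,
        (∏ k, nu (c k) (w k)) = nu (c i) (w i) * (nu (c j) (w j) *
          ∏ k ∈ (Finset.univ.erase i).erase j, nu (c k) (w k)) := by
      intro c
      rw [Finset.mul_prod_erase _ (fun k => nu (c k) (w k)) hji,
        Finset.mul_prod_erase _ (fun k => nu (c k) (w k)) (Finset.mem_univ i)]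
    rw [hsplit, hsplit]
    have hu1i : u1 i = v i + 2 := by
      simp [hu1, Finsupp.add_apply, Finsupp.single_apply, Ne.symm hij]
    have hu1j : u1 j = v j + 1 := by
      simp [hu1, Finsupp.add_apply, Finsupp.single_apply, hij]
    have hu2i : u2 i = v i + 1 := by
      simp [hu2, Finsupp.add_apply, Finsupp.single_apply, Ne.symm hij]
    have hu2j : u2 j = v j + 2 := by
      simp [hu2, Finsupp.add_apply, Finsupp.single_apply, hij]
    have hu1k : ∀ k ∈ (Finset.univ.erase i).erase j, u1 k = v k := by
      intro k hk
      obtain ⟨hkj, hki, -⟩ : k ≠ j ∧ k ≠ i ∧ True := by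
        have h1 := Finset.mem_erase.mp hk
        have h2 := Finset.mem_erase.mp h1.2
        exact ⟨h1.1, h2.1, trivial⟩
      simp [hu1, Finsupp.add_apply, Finsupp.single_apply, Ne.symm hki, Ne.symm hkj]
    have hu2k : ∀ k ∈ (Finset.univ.erase i).erase j, u2 k = v k := by
      intro k hk
      obtain ⟨hkj, hki, -⟩ : k ≠ j ∧ k ≠ i ∧ True := by
        have h1 := Finset.mem_erase.mp hk
        have h2 := Finset.mem_erase.mp h1.2
        exact ⟨h1.1, h2.1, trivial⟩
      simp [hu2, Finsupp.add_apply, Finsupp.single_apply, Ne.symm hki, Ne.symm hkj]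
    rw [hu1i, hu1j, hu2i, hu2j,
      Finset.prod_congr rfl (fun k hk => by rw [hu1k k hk]),
      show (∏ k ∈ (Finset.univ.erase i).erase j, nu (u2 k) (w k)) =
        ∏ k ∈ (Finset.univ.erase i).erase j, nu (v k) (w k) from
        Finset.prod_congr rfl (fun k hk => by rw [hu2k k hk])]
    set P : ZMod 2 := ∏ k ∈ (Finset.univ.erase i).erase j, nu (v k) (w k) with hP
    -- now a pure identity about nu
    have hvsum : v i + (v j + (∑ k ∈ (Finset.univ.erase i).erase j, v k)) = ∑ k, v k := by
      rw [Finset.add_sum_erase _ (fun k => v k) hji,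
        Finset.add_sum_erase _ (fun k => v k) (Finset.mem_univ i)]
    have hwsum : w i + (w j + (∑ k ∈ (Finset.univ.erase i).erase j, w k)) = 2 ^ (n - 1) := by
      rw [Finset.add_sum_erase _ (fun k => w k) hji,
        Finset.add_sum_erase _ (fun k => w k) (Finset.mem_univ i), hw]
    rcases Nat.eq_zero_or_pos (w i) with hwi | hwi
    · have h1 : nu (v i + 2) (w i) = 0 := by rw [hwi, nu_zero_right, if_neg (by omega)]
      have h2 : nu (v i + 1) (w i) = 0 := by rw [hwi, nu_zero_right, if_neg (by omega)]
      rw [h1, h2, zero_mul, zero_mul]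
    rcases Nat.eq_zero_or_pos (w j) with hwj | hwj
    · have h1 : nu (v j + 1) (w j) = 0 := by rw [hwj, nu_zero_right, if_neg (by omega)]
      have h2 : nu (v j + 2) (w j) = 0 := by rw [hwj, nu_zero_right, if_neg (by omega)]
      rw [h1, h2, zero_mul, mul_zero, mul_zero]
    have hterm1 : nu (v i) (w i - 1) * (nu (v j + 1) (w j) * P) = 0 := by
      by_contra hne
      have h1 : nu (v i) (w i - 1) ≠ 0 := fun h => hne (by rw [h, zero_mul])
      have h2 : nu (v j + 1) (w j) ≠ 0 := fun h => hne (by rw [h, zero_mul, mul_zero])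
      have h3 : P ≠ 0 := fun h => hne (by rw [h, mul_zero, mul_zero])
      have hb1 := nu_ne_zero h1
      have hb2 := nu_ne_zero h2
      have hPk : ∀ k ∈ (Finset.univ.erase i).erase j, nu (v k) (w k) ≠ 0 :=
        Finset.prod_ne_zero_iff.mp h3
      have hbP : (∑ k ∈ (Finset.univ.erase i).erase j, s2 (w k)) ≤
          ∑ k ∈ (Finset.univ.erase i).erase j, v k :=
        Finset.sum_le_sum (fun k hk => (nu_ne_zero (hPk k hk)).1)
      have hs2P : s2 (∑ k ∈ (Finset.univ.erase i).erase j, w k) ≤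
          ∑ k ∈ (Finset.univ.erase i).erase j, s2 (w k) := s2_sum_le _ _
      have htot : s2 (2 ^ (n-1) - 1) = n - 1 := s2_two_pow_sub_one _
      have hsum' : (w i - 1) + (w j + (∑ k ∈ (Finset.univ.erase i).erase j, w k)) =
          2 ^ (n-1) - 1 := by
        have := Nat.one_le_two_pow (n := n - 1)
        omega
      have hchain : s2 (2 ^ (n-1) - 1) ≤ s2 (w i - 1) + s2 (w j) +
          (∑ k ∈ (Finset.univ.erase i).erase j, s2 (w k)) := by
        calc s2 (2 ^ (n-1) - 1) = s2 ((w i - 1) + (w j + ∑ k ∈ (Finset.univ.erase i).erase j, w k)) := by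
              rw [hsum']
          _ ≤ s2 (w i - 1) + s2 (w j + ∑ k ∈ (Finset.univ.erase i).erase j, w k) := s2_add_le _ _
          _ ≤ s2 (w i - 1) + (s2 (w j) + s2 (∑ k ∈ (Finset.univ.erase i).erase j, w k)) := by
              have := s2_add_le (w j) (∑ k ∈ (Finset.univ.erase i).erase j, w k)
              omega
          _ ≤ _ := by omega
      omega
    have hterm2 : nu (v i + 1) (w i) * (nu (v j) (w j - 1) * P) = 0 := by
      by_contra hne
      have h1 : nu (v i + 1) (w i) ≠ 0 := fun h => hne (by rw [h, zero_mul])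
      have h2 : nu (v j) (w j - 1) ≠ 0 := fun h => hne (by rw [h, zero_mul, mul_zero])
      have h3 : P ≠ 0 := fun h => hne (by rw [h, mul_zero, mul_zero])
      have hb1 := nu_ne_zero h1
      have hb2 := nu_ne_zero h2
      have hPk : ∀ k ∈ (Finset.univ.erase i).erase j, nu (v k) (w k) ≠ 0 :=
        Finset.prod_ne_zero_iff.mp h3
      have hbP : (∑ k ∈ (Finset.univ.erase i).erase j, s2 (w k)) ≤
          ∑ k ∈ (Finset.univ.erase i).erase j, v k :=
        Finset.sum_le_sum (fun k hk => (nu_ne_zero (hPk k hk)).1)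
      have hs2P : s2 (∑ k ∈ (Finset.univ.erase i).erase j, w k) ≤
          ∑ k ∈ (Finset.univ.erase i).erase j, s2 (w k) := s2_sum_le _ _
      have htot : s2 (2 ^ (n-1) - 1) = n - 1 := s2_two_pow_sub_one _
      have hsum' : w i + ((w j - 1) + (∑ k ∈ (Finset.univ.erase i).erase j, w k)) =
          2 ^ (n-1) - 1 := by
        have := Nat.one_le_two_pow (n := n - 1)
        omega
      have hchain : s2 (2 ^ (n-1) - 1) ≤ s2 (w i) + s2 (w j - 1) +
          (∑ k ∈ (Finset.univ.erase i).erase j, s2 (w k)) := by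
        calc s2 (2 ^ (n-1) - 1) = s2 (w i + ((w j - 1) + ∑ k ∈ (Finset.univ.erase i).erase j, w k)) := by
              rw [hsum']
          _ ≤ s2 (w i) + s2 ((w j - 1) + ∑ k ∈ (Finset.univ.erase i).erase j, w k) := s2_add_le _ _
          _ ≤ s2 (w i) + (s2 (w j - 1) + s2 (∑ k ∈ (Finset.univ.erase i).erase j, w k)) := by
              have := s2_add_le (w j - 1) (∑ k ∈ (Finset.univ.erase i).erase j, w k)
              omega
          _ ≤ _ := by omega
      omega
    calc nu (v i + 2) (w i) * (nu (v j + 1) (w j) * P)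
        = (nu (v i + 1) (w i) + nu (v i) (w i - 1)) * (nu (v j + 1) (w j) * P) := by
          rw [← nu_R _ _ hwi]
      _ = nu (v i + 1) (w i) * (nu (v j + 1) (w j) * P) := by
          rw [add_mul, hterm1, add_zero]
      _ = nu (v i + 1) (w i) * ((nu (v j + 1) (w j) + nu (v j) (w j - 1)) * P) := by
          rw [add_mul, mul_add, hterm2, add_zero]
      _ = nu (v i + 1) (w i) * (nu (v j + 2) (w j) * P) := by
          rw [← nu_R _ _ hwj]
  rw [hmain, poly_add_self]

lemma dir1 {r n : ℕ} (hn : 1 ≤ n) (f : MvPolynomial (Fin r) (ZMod 2))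
    (hfJ : f ∈ J r) (hf : f.IsHomogeneous n) : Theta r n f = 0 := by
  classical
  have key : ∀ q : MvPolynomial (Fin r) (ZMod 2),
      Theta r n (MvPolynomial.homogeneousComponent n (q * f)) = 0 := by
    have := Submodule.span_induction
      (p := fun (x : MvPolynomial (Fin r) (ZMod 2)) _ => ∀ q,
        Theta r n (MvPolynomial.homogeneousComponent n (q * x)) = 0)
      (s := {p | ∃ i j : Fin r, p = MvPolynomial.X i ^ 2 * MvPolynomial.X j +
        MvPolynomial.X i * MvPolynomial.X j ^ 2})
      ?_ ?_ ?_ ?_ hfJ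
    · exact this
    · rintro x ⟨i, j, rfl⟩ q
      conv_lhs => rw [MvPolynomial.as_sum q]
      rw [Finset.sum_mul, map_sum, Theta_sum]
      apply Finset.sum_eq_zero
      intro v _
      rcases (show ∀ c : ZMod 2, c = 0 ∨ c = 1 by decide) (MvPolynomial.coeff v q) with hc | hc
      · rw [hc, map_zero, zero_mul, map_zero, Theta_zero]
      · rw [hc]
        exact key1 hn v i j
    · intro q
      rw [mul_zero, map_zero, Theta_zero]
    · intro x y _ _ hx hy q
      rw [mul_add, map_add, Theta_add, hx, hy, add_zero]
    · intro a x _ hx q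
      rw [smul_eq_mul, show q * (a * x) = (q * a) * x by ring]
      exact hx (q * a)
  have hcomp : MvPolynomial.homogeneousComponent n f = f := by
    rw [MvPolynomial.homogeneousComponent_of_mem
      (MvPolynomial.mem_homogeneousSubmodule n f |>.mpr hf), if_pos rfl]
  have := key 1
  rw [one_mul, hcomp] at this
  exact this

/-! ### Moving exponents around modulo J -/

lemma gen_mem {r : ℕ} (i j : Fin r) :
    (MvPolynomial.X i ^ 2 * MvPolynomial.X j + MvPolynomial.X i * MvPolynomial.X j ^ 2 :
      MvPolynomial (Fin r) (ZMod 2)) ∈ J r :=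
  Ideal.subset_span ⟨i, j, rfl⟩

lemma move {r : ℕ} (u : Fin r →₀ ℕ) (i j : Fin r) (hij : i ≠ j) (hi : 2 ≤ u i) (hj : 1 ≤ u j) :
    (MvPolynomial.monomial u 1 +
      MvPolynomial.monomial (u - Finsupp.single i 1 + Finsupp.single j 1) 1 :
      MvPolynomial (Fin r) (ZMod 2)) ∈ J r := by
  classical
  have hji : j ≠ i := fun h => hij h.symm
  have h1 : (u - Finsupp.single i 2 - Finsupp.single j 1) +
      (Finsupp.single i 2 + Finsupp.single j 1) = u := by
    ext k
    rw [Finsupp.add_apply, Finsupp.add_apply, Finsupp.tsub_apply, Finsupp.tsub_apply]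
    by_cases hik : k = i
    · subst hik
      rw [Finsupp.single_eq_same, Finsupp.single_eq_of_ne' hji]
      omega
    · by_cases hjk : k = j
      · subst hjk
        rw [Finsupp.single_eq_same, Finsupp.single_eq_of_ne' hij]
        omega
      · rw [Finsupp.single_eq_of_ne' (fun h : i = k => hik h.symm),
          Finsupp.single_eq_of_ne' (fun h : j = k => hjk h.symm)]
        omega
  have h2 : (u - Finsupp.single i 2 - Finsupp.single j 1) +
      (Finsupp.single i 1 + Finsupp.single j 2) =
      u - Finsupp.single i 1 + Finsupp.single j 1 := by
    ext k
    rw [Finsupp.add_apply, Finsupp.add_apply, Finsupp.add_apply, Finsupp.tsub_apply,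
      Finsupp.tsub_apply, Finsupp.tsub_apply]
    by_cases hik : k = i
    · subst hik
      rw [Finsupp.single_eq_same, Finsupp.single_eq_same,
        Finsupp.single_eq_of_ne' hji, Finsupp.single_eq_of_ne' hji]
      omega
    · by_cases hjk : k = j
      · subst hjk
        rw [Finsupp.single_eq_same, Finsupp.single_eq_same,
          Finsupp.single_eq_of_ne' hij, Finsupp.single_eq_of_ne' hij]
        omega
      · rw [Finsupp.single_eq_of_ne' (fun h : i = k => hik h.symm),
          Finsupp.single_eq_of_ne' (fun h : i = k => hik h.symm),
          Finsupp.single_eq_of_ne' (fun h : j = k => hjk h.symm),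
          Finsupp.single_eq_of_ne' (fun h : j = k => hjk h.symm)]
        omega
  have hXa : (MvPolynomial.X i ^ 2 * MvPolynomial.X j : MvPolynomial (Fin r) (ZMod 2)) =
      MvPolynomial.monomial (Finsupp.single i 2 + Finsupp.single j 1) 1 := by
    rw [MvPolynomial.X_pow_eq_monomial, MvPolynomial.X, MvPolynomial.monomial_mul, mul_one]
  have hXb : (MvPolynomial.X i * MvPolynomial.X j ^ 2 : MvPolynomial (Fin r) (ZMod 2)) =
      MvPolynomial.monomial (Finsupp.single i 1 + Finsupp.single j 2) 1 := by
    rw [MvPolynomial.X_pow_eq_monomial, MvPolynomial.X, MvPolynomial.monomial_mul, mul_one]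
  have hfac : (MvPolynomial.monomial (u - Finsupp.single i 2 - Finsupp.single j 1) 1 :
      MvPolynomial (Fin r) (ZMod 2)) *
      (MvPolynomial.X i ^ 2 * MvPolynomial.X j + MvPolynomial.X i * MvPolynomial.X j ^ 2) =
      MvPolynomial.monomial u 1 +
        MvPolynomial.monomial (u - Finsupp.single i 1 + Finsupp.single j 1) 1 := by
    rw [mul_add, hXa, hXb, MvPolynomial.monomial_mul, MvPolynomial.monomial_mul, one_mul, h1, h2]
  rw [← hfac]
  exact Ideal.mul_mem_left _ _ (gen_mem i j)

/-! ### The canonical representative of a support -/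

noncomputable def repS {r : ℕ} (n : ℕ) (S : Finset (Fin r)) : Fin r →₀ ℕ :=
  if h : S.Nonempty then
    (∑ i ∈ S, Finsupp.single i 1) + Finsupp.single (S.min' h) (n - S.card)
  else 0

lemma sum_singles_apply {r : ℕ} (S : Finset (Fin r)) (k : Fin r) :
    (∑ i ∈ S, (Finsupp.single i 1 : Fin r →₀ ℕ)) k = if k ∈ S then 1 else 0 := by
  classical
  rw [Finsupp.finset_sum_apply]
  rw [show (∑ i ∈ S, (Finsupp.single i 1 : Fin r →₀ ℕ) k) =
    ∑ i ∈ S, (if i = k then 1 else 0) from Finset.sum_congr rfl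
      (fun i _ => Finsupp.single_apply), Finset.sum_ite_eq' S k (fun _ => 1)]

lemma repS_apply {r : ℕ} (n : ℕ) (S : Finset (Fin r)) (h : S.Nonempty) (k : Fin r) :
    repS n S k = (if k ∈ S then 1 else 0) + (if S.min' h = k then n - S.card else 0) := by
  rw [repS, dif_pos h, Finsupp.add_apply, sum_singles_apply, Finsupp.single_apply]

lemma repS_min {r : ℕ} (n : ℕ) (S : Finset (Fin r)) (h : S.Nonempty) :
    repS n S (S.min' h) = 1 + (n - S.card) := by
  rw [repS_apply n S h, if_pos (S.min'_mem h), if_pos rfl]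

lemma repS_mem {r : ℕ} (n : ℕ) (S : Finset (Fin r)) (h : S.Nonempty) (k : Fin r)
    (hk : k ∈ S) (hne : k ≠ S.min' h) : repS n S k = 1 := by
  rw [repS_apply n S h, if_pos hk, if_neg (fun hc => hne hc.symm), add_zero]

lemma repS_not_mem {r : ℕ} (n : ℕ) (S : Finset (Fin r)) (k : Fin r)
    (hk : k ∉ S) : repS n S k = 0 := by
  by_cases h : S.Nonempty
  · rw [repS_apply n S h, if_neg hk, if_neg (fun hc => hk (by rw [← hc]; exact S.min'_mem h)),
      add_zero]
  · rw [repS, dif_neg h]; rfl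

lemma repS_pos {r : ℕ} (n : ℕ) (S : Finset (Fin r)) (h : S.Nonempty) (k : Fin r)
    (hk : k ∈ S) : 1 ≤ repS n S k := by
  rw [repS_apply n S h, if_pos hk]
  omega

lemma repS_sum {r : ℕ} (n : ℕ) (S : Finset (Fin r)) (h : S.Nonempty) (hcard : S.card ≤ n) :
    (∑ k, repS n S k) = n := by
  classical
  have : ∀ k, repS n S k = (if k ∈ S then 1 else 0) + (if S.min' h = k then n - S.card else 0) :=
    repS_apply n S h
  rw [Finset.sum_congr rfl (fun k _ => this k), Finset.sum_add_distrib]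
  have h1 : (∑ k : Fin r, if k ∈ S then (1:ℕ) else 0) = S.card := by
    rw [Finset.sum_ite_mem, Finset.univ_inter, Finset.card_eq_sum_ones]
  have h2 : (∑ k : Fin r, if S.min' h = k then n - S.card else 0) = n - S.card := by
    rw [Finset.sum_ite_eq (Finset.univ : Finset (Fin r)) (S.min' h) (fun _ => n - S.card),
      if_pos (Finset.mem_univ _)]
  rw [h1, h2]
  have hS1 : 1 ≤ S.card := Finset.card_pos.mpr h
  omega

/-! ### Every monomial is congruent to its canonical representative mod J -/

lemma canon_aux {r n : ℕ} (hn : 1 ≤ n) :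
    ∀ m : ℕ, ∀ (u : Fin r →₀ ℕ) (hu : u.support.Nonempty), (∑ i, u i) = n →
      n - u (u.support.min' hu) ≤ m →
      (MvPolynomial.monomial u 1 + MvPolynomial.monomial (repS n u.support) 1 :
        MvPolynomial (Fin r) (ZMod 2)) ∈ J r := by
  classical
  intro m
  induction m using Nat.strong_induction_on with
  | _ m ih =>
    intro u hu hdeg hmeas
    set i0 := u.support.min' hu with hi0
    have hi0mem : i0 ∈ u.support := u.support.min'_mem hu
    have hupos : ∀ k ∈ u.support, 1 ≤ u k := fun k hk =>
      Nat.one_le_iff_ne_zero.mpr (Finsupp.mem_support_iff.mp hk)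
    have hsum_supp : (∑ k ∈ u.support, u k) = n := by
      rw [← hdeg]
      exact Finset.sum_subset (Finset.subset_univ _)
        (fun k _ hk => Finsupp.notMem_support_iff.mp hk)
    have hcard : u.support.card ≤ n := by
      calc u.support.card = ∑ k ∈ u.support, 1 := (Finset.card_eq_sum_ones _)
        _ ≤ ∑ k ∈ u.support, u k := Finset.sum_le_sum hupos
        _ = n := hsum_supp
    by_cases hrep : u = repS n u.support
    · rw [← hrep, poly_add_self]
      exact (J r).zero_mem
    -- find i ≠ i0 with u i ≥ 2
    have hex : ∃ i ∈ u.support, i ≠ i0 ∧ 2 ≤ u i := by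
      by_contra hcon
      push_neg at hcon
      apply hrep
      have hcard_eq : (∑ k ∈ u.support.erase i0, u k) = u.support.card - 1 := by
        have : ∀ k ∈ u.support.erase i0, u k = 1 := by
          intro k hk
          obtain ⟨hne, hmem⟩ := Finset.mem_erase.mp hk
          have := hcon k hmem hne
          have := hupos k hmem
          omega
        rw [Finset.sum_congr rfl this, ← Finset.card_eq_sum_ones,
          Finset.card_erase_of_mem hi0mem]
      have hui0 : u i0 = n - u.support.card + 1 := by
        have h5 : u i0 + ∑ k ∈ u.support.erase i0, u k = ∑ k ∈ u.support, u k :=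
          Finset.add_sum_erase _ (fun k => u k) hi0mem
        have h1 : 1 ≤ u.support.card := Finset.card_pos.mpr hu
        omega
      ext k
      by_cases hks : k ∈ u.support
      · by_cases hki : k = i0
        · subst hki
          rw [hui0, repS_min n _ hu]
          omega
        · rw [repS_mem n _ hu k hks hki]
          have := hcon k hks hki
          have := hupos k hks
          omega
      · rw [repS_not_mem n _ k hks]
        exact Finsupp.notMem_support_iff.mp hks
    obtain ⟨i, himem, hine, hige2⟩ := hex
    set u' : Fin r →₀ ℕ := u - Finsupp.single i 1 + Finsupp.single i0 1 with hu'
    have hu'app : ∀ k, u' k = u k - (if i = k then 1 else 0) + (if i0 = k then 1 else 0) := by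
      intro k
      rw [hu', Finsupp.add_apply, Finsupp.tsub_apply, Finsupp.single_apply, Finsupp.single_apply]
    have hii0 : i ≠ i0 := hine
    have hu'i : u' i = u i - 1 := by rw [hu'app, if_pos rfl, if_neg (fun h => hii0 h.symm)]; omega
    have hu'i0 : u' i0 = u i0 + 1 := by
      rw [hu'app, if_neg (fun h : i = i0 => hii0 h), if_pos rfl]
      omega
    have hu'k : ∀ k, k ≠ i → k ≠ i0 → u' k = u k := by
      intro k hk1 hk2
      rw [hu'app, if_neg (fun h : i = k => hk1 h.symm), if_neg (fun h : i0 = k => hk2 h.symm)]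
      omega
    have hsupp' : u'.support = u.support := by
      ext k
      rw [Finsupp.mem_support_iff, Finsupp.mem_support_iff]
      by_cases hk1 : k = i
      · subst hk1
        rw [hu'i]
        constructor
        · intro h hc; omega
        · intro h; omega
      · by_cases hk2 : k = i0
        · subst hk2
          rw [hu'i0]
          have := hupos i0 hi0mem
          constructor
          · intro _ hc; omega
          · intro _; omega
        · rw [hu'k k hk1 hk2]
    have hmem_move : (MvPolynomial.monomial u 1 + MvPolynomial.monomial u' 1 :
        MvPolynomial (Fin r) (ZMod 2)) ∈ J r :=
      move u i i0 hii0 hige2 (hupos i0 hi0mem)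
    -- measure decreases
    have hii0' : i ∈ (Finset.univ : Finset (Fin r)).erase i0 :=
      Finset.mem_erase.mpr ⟨hii0, Finset.mem_univ i⟩
    have hsum_split : u i0 + (u i + ∑ k ∈ (Finset.univ.erase i0).erase i, u k) = n := by
      rw [Finset.add_sum_erase _ (fun k => u k) hii0',
        Finset.add_sum_erase _ (fun k => u k) (Finset.mem_univ i0), hdeg]
    have hdeg' : (∑ k, u' k) = n := by
      have hsum_split' : (∑ k, u' k) =
          u' i0 + (u' i + ∑ k ∈ (Finset.univ.erase i0).erase i, u' k) := by
        rw [Finset.add_sum_erase _ (fun k => u' k) hii0',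
          Finset.add_sum_erase _ (fun k => u' k) (Finset.mem_univ i0)]
      have hrest : (∑ k ∈ (Finset.univ.erase i0).erase i, u' k) =
          ∑ k ∈ (Finset.univ.erase i0).erase i, u k := by
        apply Finset.sum_congr rfl
        intro k hk
        obtain ⟨hki, hki0, -⟩ : k ≠ i ∧ k ≠ i0 ∧ True := by
          have h1 := Finset.mem_erase.mp hk
          have h2 := Finset.mem_erase.mp h1.2
          exact ⟨h1.1, h2.1, trivial⟩
        exact hu'k k hki hki0
      rw [hsum_split', hrest, hu'i, hu'i0]
      omega
    have hu'nonempty : u'.support.Nonempty := by rw [hsupp']; exact hu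
    have hmin' : u'.support.min' hu'nonempty = i0 := by
      have : u'.support.min' hu'nonempty = u.support.min' hu := by
        congr 1
      rw [this, ← hi0]
    have hmeas' : n - u' (u'.support.min' hu'nonempty) < m := by
      rw [hmin', hu'i0]
      -- u i0 + u i ≤ n and u i ≥ 2, so n - u i0 ≥ 2
      have hge : u i0 + 2 ≤ n := by omega
      omega
    have hIH := ih (n - u' (u'.support.min' hu'nonempty)) hmeas' u' hu'nonempty hdeg' (le_refl _)
    rw [hsupp'] at hIH
    -- combine
    have hcomb : (MvPolynomial.monomial u 1 + MvPolynomial.monomial (repS n u.support) 1 :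
        MvPolynomial (Fin r) (ZMod 2)) =
        (MvPolynomial.monomial u 1 + MvPolynomial.monomial u' 1) +
        (MvPolynomial.monomial u' 1 + MvPolynomial.monomial (repS n u.support) 1) := by
      have h0 := poly_add_self (MvPolynomial.monomial u' 1)
      linear_combination -h0
    rw [hcomb]
    exact (J r).add_mem hmem_move hIH

lemma canon {r n : ℕ} (hn : 1 ≤ n) (u : Fin r →₀ ℕ) (hu : u.support.Nonempty)
    (hdeg : (∑ i, u i) = n) :
    (MvPolynomial.monomial u 1 + MvPolynomial.monomial (repS n u.support) 1 :
      MvPolynomial (Fin r) (ZMod 2)) ∈ J r :=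
  canon_aux hn (n - u (u.support.min' hu)) u hu hdeg (le_refl _)

/-! ### The witness monomial for a support -/

lemma le_two_pow_pred {m : ℕ} (h : 1 ≤ m) : m ≤ 2 ^ (m - 1) := by
  induction m with
  | zero => omega
  | succ m ih =>
    rcases Nat.eq_zero_or_pos m with h0 | h0
    · subst h0; norm_num
    · have h1 := ih h0
      have h2 : (2:ℕ) ^ (m - 1) ≥ 1 := Nat.one_le_two_pow
      have h3 : m + 1 - 1 = (m - 1) + 1 := by omega
      rw [h3, pow_succ]
      omega

lemma geom_two (c t : ℕ) : (∑ k ∈ Finset.range t, 2 ^ (c + k)) = 2 ^ (c + t) - 2 ^ c := by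
  induction t with
  | zero => simp
  | succ t ih =>
    rw [Finset.sum_range_succ, ih, show c + (t + 1) = (c + t) + 1 by ring, pow_succ]
    have h1 : (2:ℕ) ^ c ≤ 2 ^ (c + t) := Nat.pow_le_pow_right (by norm_num) (by omega)
    omega

noncomputable def wW {r : ℕ} (n : ℕ) (S : Finset (Fin r)) (h : S.Nonempty) : Fin r →₀ ℕ :=
  Finsupp.single (S.min' h) (2 ^ (n - S.card)) +
    ∑ k : Fin ((S.erase (S.min' h)).card),
      Finsupp.single (((S.erase (S.min' h)).orderIsoOfFin rfl k : Fin r))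
        (2 ^ (n - S.card + (k : ℕ)))

section wWfacts

variable {r : ℕ} (n : ℕ) (S : Finset (Fin r)) (h : S.Nonempty)

lemma wW_apply (x : Fin r) : wW n S h x =
    (if S.min' h = x then 2 ^ (n - S.card) else 0) +
    ∑ k : Fin ((S.erase (S.min' h)).card),
      (if ((S.erase (S.min' h)).orderIsoOfFin rfl k : Fin r) = x
        then 2 ^ (n - S.card + (k : ℕ)) else 0) := by
  rw [wW, Finsupp.add_apply, Finsupp.single_apply, Finsupp.finset_sum_apply]
  congr 1
  exact Finset.sum_congr rfl fun k _ => Finsupp.single_apply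

lemma wW_min : wW n S h (S.min' h) = 2 ^ (n - S.card) := by
  rw [wW_apply, if_pos rfl]
  have hzero : ∀ k : Fin ((S.erase (S.min' h)).card),
      (if ((S.erase (S.min' h)).orderIsoOfFin rfl k : Fin r) = S.min' h
        then 2 ^ (n - S.card + (k : ℕ)) else 0) = 0 := by
    intro k
    rw [if_neg]
    intro hc
    have hmem := ((S.erase (S.min' h)).orderIsoOfFin rfl k).2
    rw [hc] at hmem
    exact (Finset.notMem_erase _ _) hmem
  rw [Finset.sum_congr rfl (fun k _ => hzero k), Finset.sum_const_zero, add_zero]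

lemma wW_mem (x : Fin r) (hx : x ∈ S.erase (S.min' h)) :
    ∃ c : ℕ, wW n S h x = 2 ^ c := by
  classical
  set T := S.erase (S.min' h) with hT
  set k0 := (T.orderIsoOfFin rfl).symm ⟨x, hx⟩ with hk0
  refine ⟨n - S.card + (k0 : ℕ), ?_⟩
  rw [wW_apply, if_neg (fun hc => (Finset.ne_of_mem_erase hx) hc.symm), zero_add]
  rw [Finset.sum_eq_single k0]
  · rw [if_pos]
    rw [hk0]
    simp
    exact congrArg Subtype.val ((T.orderIsoOfFin rfl).apply_symm_apply ⟨x, hx⟩)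
  · intro k _ hk
    rw [if_neg]
    intro hc
    apply hk
    have : (T.orderIsoOfFin rfl) k = ⟨x, hx⟩ := Subtype.ext hc
    rw [← (T.orderIsoOfFin rfl).symm_apply_apply k, this, hk0]
  · intro hk
    exact absurd (Finset.mem_univ k0) hk

lemma wW_not_mem (x : Fin r) (hx : x ∉ S) : wW n S h x = 0 := by
  rw [wW_apply, if_neg (fun hc => hx (by rw [← hc]; exact S.min'_mem h)), zero_add]
  apply Finset.sum_eq_zero
  intro k _
  rw [if_neg]
  intro hc
  exact hx (Finset.mem_of_mem_erase (hc ▸ ((S.erase (S.min' h)).orderIsoOfFin rfl k).2))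

lemma wW_pos (x : Fin r) (hx : x ∈ S) : 1 ≤ wW n S h x := by
  by_cases hmin : x = S.min' h
  · subst hmin
    rw [wW_min]
    exact Nat.one_le_two_pow
  · obtain ⟨c, hc⟩ := wW_mem n S h x (Finset.mem_erase.mpr ⟨hmin, hx⟩)
    rw [hc]
    exact Nat.one_le_two_pow

lemma wW_sum (hcard : S.card ≤ n) (hn : 1 ≤ n) : (∑ x, wW n S h x) = 2 ^ (n - 1) := by
  classical
  have hcard1 : 1 ≤ S.card := Finset.card_pos.mpr h
  have hT : (S.erase (S.min' h)).card = S.card - 1 :=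
    Finset.card_erase_of_mem (S.min'_mem h)
  have hsum : (∑ x, wW n S h x) = 2 ^ (n - S.card) +
      ∑ k : Fin ((S.erase (S.min' h)).card), 2 ^ (n - S.card + (k : ℕ)) := by
    rw [Finset.sum_congr rfl (fun x _ => wW_apply n S h x), Finset.sum_add_distrib]
    congr 1
    · rw [Finset.sum_ite_eq (Finset.univ : Finset (Fin r)) (S.min' h) (fun _ => 2 ^ (n - S.card)),
        if_pos (Finset.mem_univ _)]
    · rw [Finset.sum_comm]
      apply Finset.sum_congr rfl
      intro k _
      rw [Finset.sum_ite_eq Finset.univ (((S.erase (S.min' h)).orderIsoOfFin rfl k : Fin r))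
        (fun _ => 2 ^ (n - S.card + (k : ℕ))), if_pos (Finset.mem_univ _)]
  rw [hsum, Fin.sum_univ_eq_sum_range (fun k => 2 ^ (n - S.card + k)), geom_two, hT]
  have hpow : (2:ℕ) ^ (n - S.card) ≤ 2 ^ (n - S.card + (S.card - 1)) :=
    Nat.pow_le_pow_right (by norm_num) (by omega)
  have hexp : n - S.card + (S.card - 1) = n - 1 := by omega
  rw [hexp]
  have h2 : (2:ℕ) ^ (n - S.card) ≤ 2 ^ (n - 1) :=
    Nat.pow_le_pow_right (by norm_num) (by omega)
  omega

lemma prod_nu_repS_wW (hcard : S.card ≤ n) (hn : 1 ≤ n) :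
    (∏ x, nu (repS n S x) (wW n S h x)) = 1 := by
  apply Finset.prod_eq_one
  intro x _
  by_cases hxS : x ∈ S
  · by_cases hmin : x = S.min' h
    · subst hmin
      rw [wW_min, repS_min n S h]
      have hm : 1 + (n - S.card) = (n - S.card + 1) := by omega
      have hc1 : 1 ≤ S.card := Finset.card_pos.mpr h
      have hex : n - S.card = (n - S.card + 1) - 1 := by omega
      rw [hm, hex]
      exact nu_two_pow (by omega) (le_two_pow_pred (by omega))
    · rw [repS_mem n S h x hxS hmin]
      obtain ⟨c, hc⟩ := wW_mem n S h x (Finset.mem_erase.mpr ⟨hmin, hxS⟩)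
      rw [hc]
      exact nu_one_two_pow c
  · rw [repS_not_mem n S x hxS, wW_not_mem n S h x hxS, nu_zero_right, if_pos rfl]

lemma prod_nu_cross (S' : Finset (Fin r)) (h' : S'.Nonempty) (hne : S' ≠ S) :
    (∏ x, nu (repS n S' x) (wW n S h x)) = 0 := by
  classical
  by_cases hsub : S' ⊆ S
  · obtain ⟨x, hxS, hxS'⟩ := Finset.exists_of_ssubset (lt_of_le_of_ne hsub hne)
    apply Finset.prod_eq_zero (Finset.mem_univ x)
    rw [repS_not_mem n S' x hxS', nu_zero_left,
      if_neg (by have := wW_pos n S h x hxS; omega)]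
  · obtain ⟨x, hxS', hxS⟩ := Finset.not_subset.mp hsub
    apply Finset.prod_eq_zero (Finset.mem_univ x)
    rw [wW_not_mem n S h x hxS, nu_zero_right,
      if_neg (by have := repS_pos n S' h' x hxS'; omega)]

end wWfacts

/-! ### Direction 2 -/

lemma dir2 {r n : ℕ} (hn : 1 ≤ n) (f : MvPolynomial (Fin r) (ZMod 2))
    (hf : f.IsHomogeneous n) (hθ : Theta r n f = 0) : f ∈ J r := by
  classical
  have hdegu : ∀ u ∈ f.support, (∑ i, u i) = n := by
    intro u hu
    have hc := MvPolynomial.mem_support_iff.mp hu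
    have := hf hc
    rw [← degree_eq_sum_univ, Finsupp.degree_eq_weight_one]
    exact this
  have hsuppne : ∀ u ∈ f.support, u.support.Nonempty := by
    intro u hu
    rcases Finset.eq_empty_or_nonempty u.support with he | hne
    · exfalso
      have : (∑ i, u i) = 0 := by
        apply Finset.sum_eq_zero
        intro i _
        by_contra hzero
        exact (Finset.eq_empty_iff_forall_notMem.mp he i)
          (Finsupp.mem_support_iff.mpr hzero)
      have := hdegu u hu
      omega
    · exact hne
  have hcardu : ∀ u ∈ f.support, u.support.card ≤ n := by
    intro u hu
    calc u.support.card = ∑ k ∈ u.support, 1 := Finset.card_eq_sum_ones _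
      _ ≤ ∑ k ∈ u.support, u k := Finset.sum_le_sum
          (fun k hk => Nat.one_le_iff_ne_zero.mpr (Finsupp.mem_support_iff.mp hk))
      _ = ∑ k, u k := Finset.sum_subset (Finset.subset_univ _)
          (fun k _ hk => Finsupp.notMem_support_iff.mp hk)
      _ = n := hdegu u hu
  set g : MvPolynomial (Fin r) (ZMod 2) :=
    ∑ u ∈ f.support, MvPolynomial.monomial (repS n u.support) 1 with hg
  -- f + g ∈ J
  have hfg : f + g ∈ J r := by
    have hf_eq : f = ∑ u ∈ f.support, MvPolynomial.monomial u 1 := by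
      conv_lhs => rw [MvPolynomial.as_sum f]
      apply Finset.sum_congr rfl
      intro u hu
      congr 1
      have hc := MvPolynomial.mem_support_iff.mp hu
      rcases (show ∀ c : ZMod 2, c = 0 ∨ c = 1 by decide) (MvPolynomial.coeff u f) with h0 | h1
      · exact absurd h0 hc
      · exact h1
    have hfg2 : f + g = ∑ u ∈ f.support,
        (MvPolynomial.monomial u 1 + MvPolynomial.monomial (repS n u.support) 1) := by
      rw [Finset.sum_add_distrib, ← hg, ← hf_eq]
    rw [hfg2]
    apply Ideal.sum_mem
    intro u hu
    exact canon hn u (hsuppne u hu) (hdegu u hu)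
  -- g is homogeneous of degree n
  have hg_hom : g.IsHomogeneous n := by
    rw [hg]
    apply MvPolynomial.IsHomogeneous.sum
    intro u hu
    apply MvPolynomial.isHomogeneous_monomial
    rw [degree_eq_sum_univ]
    exact repS_sum n u.support (hsuppne u hu) (hcardu u hu)
  -- Theta g = 0
  have hθg : Theta r n g = 0 := by
    have h1 : Theta r n (f + g) = 0 := dir1 hn (f + g) hfg (hf.add hg_hom)
    rw [Theta_add, hθ, zero_add] at h1
    exact h1
  -- compute Theta g
  have hθg_eq : Theta r n g = ∑ u ∈ f.support,
      ThetaMono r n (fun i => repS n u.support i) := by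
    rw [hg, Theta_sum]
    exact Finset.sum_congr rfl fun u _ => Theta_monomial _
  -- fiber counts are even
  have hkey : ∀ S₀ : Finset (Fin r), S₀.Nonempty → S₀.card ≤ n →
      ((f.support.filter (fun u => u.support = S₀)).card : ZMod 2) = 0 := by
    intro S₀ hS₀ hcard₀
    have hco : MvPolynomial.coeff (wW n S₀ hS₀) (Theta r n g) = 0 := by rw [hθg]; rfl
    rw [hθg_eq, MvPolynomial.coeff_sum] at hco
    have hterm : ∀ u ∈ f.support,
        MvPolynomial.coeff (wW n S₀ hS₀) (ThetaMono r n (fun i => repS n u.support i)) =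
        if u.support = S₀ then 1 else 0 := by
      intro u hu
      rw [coeff_ThetaMono hn, if_pos (wW_sum n S₀ hS₀ hcard₀ hn)]
      by_cases hus : u.support = S₀
      · rw [if_pos hus, hus]
        exact prod_nu_repS_wW n S₀ hS₀ hcard₀ hn
      · rw [if_neg hus]
        exact prod_nu_cross n S₀ hS₀ u.support (hsuppne u hu) hus
    rw [Finset.sum_congr rfl hterm, Finset.sum_boole] at hco
    exact hco
  -- hence g = 0
  have hg0 : g = 0 := by
    rw [hg, ← Finset.sum_fiberwise f.support (fun u => u.support)
      (fun u => MvPolynomial.monomial (repS n u.support) (1 : ZMod 2))]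
    apply Finset.sum_eq_zero
    intro S₀ _
    rcases Finset.eq_empty_or_nonempty (f.support.filter (fun u => u.support = S₀)) with he | hne
    · rw [he, Finset.sum_empty]
    · obtain ⟨u₀, hu₀⟩ := hne
      obtain ⟨hu₀f, hu₀S⟩ := Finset.mem_filter.mp hu₀
      have hS₀ne : S₀.Nonempty := hu₀S ▸ hsuppne u₀ hu₀f
      have hS₀card : S₀.card ≤ n := hu₀S ▸ hcardu u₀ hu₀f
      have heven : 2 ∣ (f.support.filter (fun u => u.support = S₀)).card := by
        have := hkey S₀ hS₀ne hS₀card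
        exact_mod_cast (ZMod.natCast_eq_zero_iff _ 2).mp this
      obtain ⟨c, hc⟩ := heven
      have hconst : (∑ u ∈ f.support.filter (fun u => u.support = S₀),
          MvPolynomial.monomial (repS n u.support) (1 : ZMod 2)) =
          (f.support.filter (fun u => u.support = S₀)).card •
            MvPolynomial.monomial (repS n S₀) (1 : ZMod 2) := by
        rw [Finset.sum_congr rfl (fun u hu => by
          rw [(Finset.mem_filter.mp hu).2]), Finset.sum_const]
      rw [hconst, hc, mul_comm, mul_smul]
      rw [show (2 : ℕ) • (MvPolynomial.monomial (repS n S₀) (1 : ZMod 2)) = 0 from by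
        rw [two_smul, poly_add_self]]
      rw [smul_zero]
  have : f = (f + g) := by rw [hg0, add_zero]
  rw [this]
  exact hfg

/-- A homogeneous polynomial `f` of degree `n ≥ 1` belongs to the ideal `J r` if and only if
`Θ n (f) = 0`: the canonical ideal of the elementary abelian 2-group of rank `r` is generated
by the elements `t i ^ 2 * t j + t i * t j ^ 2`. -/
theorem stmt_14 (r n : ℕ) (hr : 1 ≤ r) (hn : 1 ≤ n)
    (f : MvPolynomial (Fin r) (ZMod 2)) (hf : f.IsHomogeneous n) :
    f ∈ J r ↔ Theta r n f = 0 := by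
  constructor
  · intro hJ
    exact dir1 hn f hJ hf
  · intro hθ
    exact dir2 hn f hf hθ
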